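/- arXiv:1909.04896 — 2 statements merged into one kernel-verified Lean document; each statement's English description precedes it below -/
import Mathlib

section
/- Let X be a complete separable metric space, μ a Borel probability measure on X, and ℙ a measurable partition of X for μ. Then there exists a disintegration {μ_P : P ∈ ℙ} of μ with respect to ℙ. -/
open MeasureTheory Filter Set Topology

namespace ErgodicDecomposition

variable {X : Type*}

/-- `ℙ` is a partition of `X`: every point lies in exactly one element of `ℙ`. -/
def IsPartition (ℙ : Set (Set X)) : Prop := ∀ x : X, ∃! P, P ∈ ℙ ∧ x ∈ P

open Classical in
/-- The element of `ℙ` containing `x` (with junk value `∅` if there is none);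
this is the canonical projection `τ̂ : X → ℙ`. -/
noncomputable def partOf (ℙ : Set (Set X)) (x : X) : Set X :=
  if h : ∃ P, P ∈ ℙ ∧ x ∈ P then h.choose else ∅

/-- `ν` is a disintegration of `μ` with respect to the partition `ℙ`.  All statements about
the quotient space `ℙ` (its σ-algebra, the quotient measure `μ̂`, measurability of
`P ↦ μ_P(E)` and integration against `μ̂`) are expressed, equivalently, after pulling back
along the canonical projection `x ↦ partOf ℙ x`, since the σ-algebra of `ℙ` is by definition
the pushforward σ-algebra and `μ̂` is the pushforward measure. -/
def IsDisintegration [MeasurableSpace X] (μ : Measure X) (ℙ : Set (Set X))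
    (ν : Set X → Measure X) : Prop :=
  (∀ P ∈ ℙ, IsProbabilityMeasure (ν P)) ∧
  (∀ᵐ x ∂μ, ν (partOf ℙ x) (partOf ℙ x) = 1) ∧
  (∀ E : Set X, MeasurableSet E →
    Measurable (fun x => ν (partOf ℙ x) E) ∧ μ E = ∫⁻ x, ν (partOf ℙ x) E ∂μ)

/-- `ℙ` is a measurable partition for `μ`: a partition of `X` into measurable sets such that
there are a full measure set `X₀` and a refining sequence of countable partitions `Ps n` into
measurable sets with `P(x) = ⋂ n, P_n(x)` for every `x ∈ X₀`. -/
def IsMeasurablePartition [MeasurableSpace X] (μ : Measure X) (ℙ : Set (Set X)) : Prop :=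
  IsPartition ℙ ∧ (∀ P ∈ ℙ, MeasurableSet P) ∧
  ∃ X₀ : Set X, MeasurableSet X₀ ∧ μ X₀ = 1 ∧
  ∃ Ps : ℕ → Set (Set X),
    (∀ n, (Ps n).Countable) ∧
    (∀ n, IsPartition (Ps n)) ∧
    (∀ n, ∀ P ∈ Ps n, MeasurableSet P) ∧
    (∀ n, ∀ B ∈ Ps (n + 1), ∃ A ∈ Ps n, B ⊆ A) ∧
    (∀ x ∈ X₀, partOf ℙ x = ⋂ n, partOf (Ps n) x)

open Classical in
/-- `τ(x, A)`: the lim-inf of the asymptotic frequency of visits of the orbit of `x` to `A`. -/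
noncomputable def visitFreq (f : X → X) (A : Set X) (x : X) : ℝ :=
  atTop.liminf fun n : ℕ =>
    (((Finset.range n).filter fun i => f^[i] x ∈ A).card : ℝ) / n

/-- The equivalence class of `x` for the relation `x ∼ y ↔ τ(x,A) = τ(y,A)` for all `A ∈ 𝒜₀`. -/
def dynClass (f : X → X) (𝒜₀ : Set (Set X)) (x : X) : Set X :=
  {y | ∀ A ∈ 𝒜₀, visitFreq f A y = visitFreq f A x}

/-- The dynamical partition of `X` with respect to `f` and the countable algebra `𝒜₀`. -/
def dynPartition (f : X → X) (𝒜₀ : Set (Set X)) : Set (Set X) :=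
  {P | ∃ x : X, P = dynClass f 𝒜₀ x}


/- auxiliary lemmas -/

lemma partOf_spec {ℙ : Set (Set X)} (h : IsPartition ℙ) (x : X) :
    partOf ℙ x ∈ ℙ ∧ x ∈ partOf ℙ x := by
  obtain ⟨P, hP, -⟩ := h x
  rw [partOf, dif_pos ⟨P, hP⟩]
  exact (⟨P, hP⟩ : ∃ P, P ∈ ℙ ∧ x ∈ P).choose_spec

lemma partOf_eq {ℙ : Set (Set X)} (h : IsPartition ℙ) {x : X} {P : Set X}
    (hP : P ∈ ℙ) (hx : x ∈ P) : partOf ℙ x = P := by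
  obtain ⟨Q, hQ, huniq⟩ := h x
  have h1 := partOf_spec h x
  rw [huniq _ ⟨h1.1, h1.2⟩, huniq _ ⟨hP, hx⟩]

lemma inter_eq_one {Y : Type*} [MeasurableSpace Y] (ν : Measure Y) [IsProbabilityMeasure ν]
    {s t : Set Y} (hs : MeasurableSet s) (ht : MeasurableSet t)
    (h1 : ν s = 1) (h2 : ν t = 1) : ν (s ∩ t) = 1 := by
  have hsc : ν sᶜ = 0 := by rw [measure_compl hs (measure_ne_top _ _), h1, measure_univ]; simp
  have htc : ν tᶜ = 0 := by rw [measure_compl ht (measure_ne_top _ _), h2, measure_univ]; simp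
  have hc : ν (s ∩ t)ᶜ = 0 := by
    rw [Set.compl_inter]
    exact le_antisymm (le_trans (measure_union_le _ _) (by simp [hsc, htc])) zero_le'
  exact (prob_compl_eq_zero_iff (hs.inter ht)).1 hc

noncomputable def sigmaSup {X : Type*} (Ps : ℕ → Set (Set X)) : MeasurableSpace X :=
  ⨆ n, MeasurableSpace.generateFrom (Ps n)

/-- Rokhlin disintegration theorem: on a complete separable metric space, every
Borel probability measure admits a disintegration with respect to any measurable partition. -/
theorem rokhlin_disintegration {X : Type*} [MetricSpace X] [CompleteSpace X]
    [TopologicalSpace.SeparableSpace X] [MeasurableSpace X] [BorelSpace X]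
    (μ : Measure X) [IsProbabilityMeasure μ]
    (ℙ : Set (Set X)) (hℙ : IsMeasurablePartition μ ℙ) :
    ∃ ν : Set X → Measure X, IsDisintegration μ ℙ ν := by
  rename_i mX bX pX
  classical
  obtain ⟨hpart, hmeasP, X₀, hX₀m, hX₀1, Ps, hcount, hPspart, hPsmeas, href, hinter⟩ := hℙ
  set Pn : ℕ → X → Set X := fun n x => partOf (Ps n) x with hPn_def
  have hPnmem : ∀ n x, Pn n x ∈ Ps n ∧ x ∈ Pn n x := fun n x => partOf_spec (hPspart n) x
  have hPnmeas : ∀ n x, MeasurableSet (Pn n x) := fun n x => hPsmeas n _ (hPnmem n x).1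
  have hPn_eq : ∀ n {x : X} {P : Set X}, P ∈ Ps n → x ∈ P → Pn n x = P :=
    fun n _ _ hP hx => partOf_eq (hPspart n) hP hx
  have hPn_anti : ∀ x, Antitone fun n => Pn n x := by
    intro x
    apply antitone_nat_of_succ_le
    intro n
    obtain ⟨A, hA, hBA⟩ := href n _ (hPnmem (n+1) x).1
    have : Pn n x = A := hPn_eq n hA (hBA (hPnmem (n+1) x).2)
    rw [this]; exact hBA
  set A : X → Set X := fun x => ⋂ n, Pn n x with hA_def
  have hAmeas : ∀ x, MeasurableSet (A x) := fun x => MeasurableSet.iInter fun n => hPnmeas n x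
  have hxA : ∀ x, x ∈ A x := fun x => Set.mem_iInter.2 fun n => (hPnmem n x).2
  have hR : ∀ {x y : X}, y ∈ A x → ∀ n, Pn n y = Pn n x := by
    intro x y hy n
    exact hPn_eq n (hPnmem n x).1 (Set.mem_iInter.1 hy n)
  have hA_of_mem : ∀ {x y : X}, y ∈ A x → A y = A x := by
    intro x y hy
    simp only [hA_def]
    exact Set.iInter_congr fun n => hR hy n
  -- the sub-σ-algebra
  have hm : sigmaSup Ps ≤ mX :=
    iSup_le fun n => MeasurableSpace.generateFrom_le (hPsmeas n)
  have hgen : ∀ n, ∀ P ∈ Ps n, MeasurableSet[sigmaSup Ps] P := by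
    intro n P hP
    exact (le_iSup (fun n => MeasurableSpace.generateFrom (Ps n)) n) P
      (MeasurableSpace.measurableSet_generateFrom hP)
  -- m-measurable sets are unions of atoms
  have hinv : ∀ S : Set X, MeasurableSet[sigmaSup Ps] S → ∀ x y, y ∈ A x → (x ∈ S ↔ y ∈ S) := by
    let inv : MeasurableSpace X :=
      { MeasurableSet' := fun S => ∀ x y, y ∈ A x → (x ∈ S ↔ y ∈ S)
        measurableSet_empty := by simp
        measurableSet_compl := fun S hS x y hy => not_congr (hS x y hy)
        measurableSet_iUnion := fun f hf x y hy => by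
          simp only [Set.mem_iUnion]
          exact exists_congr fun i => hf i x y hy }
    have hle : sigmaSup Ps ≤ inv := by
      refine iSup_le fun n => MeasurableSpace.generateFrom_le ?_
      intro P hP x y hy
      constructor
      · intro hx
        have : Pn n x = P := hPn_eq n hP hx
        rw [← this]
        exact Set.mem_iInter.1 hy n
      · intro hyP
        have h1 : Pn n y = P := hPn_eq n hP hyP
        have h2 : Pn n y = Pn n x := hR hy n
        rw [← h1, h2]; exact (hPnmem n x).2
    exact fun S hS => hle S hS
  have hfinv : ∀ (f : X → ENNReal), Measurable[sigmaSup Ps] f → ∀ x y, y ∈ A x → f x = f y := by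
    intro f hf x y hy
    have := hinv (f ⁻¹' {f x}) (hf (measurableSet_singleton _)) x y hy
    exact (this.1 rfl).symm
  -- the conditional kernel
  set κ := ProbabilityTheory.condExpKernel μ (sigmaSup Ps) with hκ_def
  have hκmeas : ∀ {E : Set X}, MeasurableSet E → Measurable[sigmaSup Ps] fun x => κ x E := by
    intro E hE
    exact ProbabilityTheory.measurable_condExpKernel hE
  have hκBmeas : ∀ {E : Set X}, MeasurableSet E → Measurable fun x => κ x E :=
    fun hE => (hκmeas hE).mono hm le_rfl
  haveI : SigmaFinite (μ.trim hm) := by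
    have : IsFiniteMeasure (μ.trim hm) := isFiniteMeasure_trim hm
    infer_instance
  -- integral identity
  have hintR : ∀ {E : Set X}, MeasurableSet E →
      ∫ x, (κ x E).toReal ∂μ = (μ E).toReal := by
    intro E hE
    change ∫ x, (κ x).real E ∂μ = μ.real E
    rw [integral_congr_ae (ProbabilityTheory.condExpKernel_ae_eq_condExp hm hE),
      integral_condExp hm, integral_indicator hE, setIntegral_const, smul_eq_mul, mul_one]
  have hκle : ∀ (x : X) (E : Set X), κ x E ≤ 1 := fun x E => prob_le_one
  have hκtoReal_le : ∀ (x : X) (E : Set X), (κ x E).toReal ≤ 1 := by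
    intro x E
    have := ENNReal.toReal_mono (by simp) (hκle x E)
    simpa using this
  have hκint : ∀ {E : Set X}, MeasurableSet E →
      Integrable (fun x => (κ x E).toReal) μ := by
    intro E hE
    refine Integrable.mono' (integrable_const (1 : ℝ))
      ((hκBmeas hE).ennreal_toReal.aestronglyMeasurable) ?_
    refine Filter.Eventually.of_forall fun x => ?_
    rw [Real.norm_eq_abs, abs_of_nonneg ENNReal.toReal_nonneg]
    exact hκtoReal_le x E
  have hint : ∀ {E : Set X}, MeasurableSet E → ∫⁻ x, κ x E ∂μ = μ E := by
    intro E hE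
    have h1 : ENNReal.ofReal (∫ x, (κ x E).toReal ∂μ)
        = ∫⁻ x, ENNReal.ofReal ((κ x E).toReal) ∂μ :=
      ofReal_integral_eq_lintegral_ofReal (hκint hE)
        (Filter.Eventually.of_forall fun x => ENNReal.toReal_nonneg)
    rw [hintR hE] at h1
    have h2 : ∀ x, ENNReal.ofReal ((κ x E).toReal) = κ x E :=
      fun x => ENNReal.ofReal_toReal (measure_ne_top _ _)
    simp only [h2] at h1
    rw [← h1, ENNReal.ofReal_toReal (measure_ne_top _ _)]
  -- a.e. facts
  have hX₀ae : ∀ᵐ x ∂μ, κ x X₀ = 1 := by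
    have h1 : ∫⁻ x, κ x X₀ ∂μ = 1 := by rw [hint hX₀m, hX₀1]
    have h2 : ∫⁻ x, (1 : ENNReal) - κ x X₀ ∂μ = 0 := by
      rw [lintegral_sub (hκBmeas hX₀m)
        (by rw [h1]; exact ENNReal.one_ne_top)
        (Filter.Eventually.of_forall fun x => hκle x X₀)]
      simp [h1]
    have h3 := (lintegral_eq_zero_iff
      (Measurable.sub measurable_const (hκBmeas hX₀m))).1 h2
    filter_upwards [h3] with x hx
    have : (1 : ENNReal) - κ x X₀ = 0 := hx
    have h4 : (1 : ENNReal) ≤ κ x X₀ := tsub_eq_zero_iff_le.1 this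
    exact le_antisymm (hκle x X₀) h4
  have hself : ∀ S : Set X, MeasurableSet[sigmaSup Ps] S → ∀ᵐ x ∂μ, x ∈ S → κ x S = 1 := by
    intro S hSm
    have hSb : MeasurableSet S := hm S hSm
    have h1 : μ[S.indicator (fun _ => (1:ℝ)) | sigmaSup Ps] = S.indicator fun _ => (1:ℝ) :=
      condExp_of_stronglyMeasurable hm
        (StronglyMeasurable.indicator (stronglyMeasurable_const) hSm)
        ((integrable_const (1:ℝ)).indicator hSb)
    have h2 := ProbabilityTheory.condExpKernel_ae_eq_condExp (μ := μ) hm hSb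
    rw [h1] at h2
    filter_upwards [h2] with x hx hxS
    have : (κ x S).toReal = 1 := by rw [← measureReal_def]; exact hx.trans (by simp [hxS])
    have h3 : κ x S ≠ ⊤ := measure_ne_top _ _
    rw [← ENNReal.ofReal_toReal h3, this]; simp
  have hPnae : ∀ᵐ x ∂μ, ∀ n, κ x (Pn n x) = 1 := by
    rw [MeasureTheory.ae_all_iff]
    intro n
    have h1 : ∀ᵐ x ∂μ, ∀ P ∈ Ps n, x ∈ P → κ x P = 1 := by
      rw [MeasureTheory.ae_ball_iff (hcount n)]
      intro P hP
      exact hself P (hgen n P hP)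
    filter_upwards [h1] with x hx
    exact hx (Pn n x) (hPnmem n x).1 (hPnmem n x).2
  -- set W
  set W : Set X := {x | κ x X₀ = 1 ∧ ∀ n, κ x (Pn n x) = 1} with hW_def
  have hWae : ∀ᵐ x ∂μ, x ∈ W := by
    filter_upwards [hX₀ae, hPnae] with x h1 h2
    exact ⟨h1, h2⟩
  have hWb : MeasurableSet W := by
    have h1 : MeasurableSet {x | κ x X₀ = 1} :=
      (hκBmeas hX₀m) (measurableSet_singleton 1)
    have h2 : ∀ n, MeasurableSet {x | κ x (Pn n x) = 1} := by
      intro n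
      have heq : {x | κ x (Pn n x) = 1} = ⋃ P ∈ Ps n, (P ∩ {x | κ x P = 1}) := by
        ext x
        simp only [Set.mem_setOf_eq, Set.mem_iUnion, Set.mem_inter_iff, exists_prop]
        constructor
        · intro hx
          exact ⟨Pn n x, (hPnmem n x).1, (hPnmem n x).2, hx⟩
        · rintro ⟨P, hP, hxP, hx1⟩
          rw [hPn_eq n hP hxP]; exact hx1
      rw [heq]
      exact MeasurableSet.biUnion (hcount n) fun P hP =>
        (hPsmeas n P hP).inter ((hκBmeas (hPsmeas n P hP)) (measurableSet_singleton 1))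
    have heq : W = {x | κ x X₀ = 1} ∩ ⋂ n, {x | κ x (Pn n x) = 1} := by
      ext x
      simp only [hW_def, Set.mem_setOf_eq, Set.mem_inter_iff, Set.mem_iInter]
    rw [heq]
    exact h1.inter (MeasurableSet.iInter h2)
  -- W is a union of atoms
  have hWinv : ∀ x y, y ∈ A x → (x ∈ W ↔ y ∈ W) := by
    intro x y hy
    have h1 : κ x X₀ = κ y X₀ := hfinv _ (hκmeas hX₀m) x y hy
    have h2 : ∀ n, κ y (Pn n y) = κ x (Pn n x) := by
      intro n
      rw [hR hy n]
      exact (hfinv _ (hκmeas (hPnmeas n x)) x y hy).symm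
    constructor
    · rintro ⟨ha, hb⟩
      exact ⟨h1 ▸ ha, fun n => (h2 n).trans (hb n)⟩
    · rintro ⟨ha, hb⟩
      exact ⟨h1.symm ▸ ha, fun n => ((h2 n).symm.trans (hb n))⟩
  -- on W the conditional measure is concentrated on the atom
  have hAx1 : ∀ x ∈ W, κ x (A x) = 1 := by
    intro x hx
    have hd : Directed (· ⊇ ·) fun n => Pn n x := (hPn_anti x).directed_ge
    have h1 : κ x (A x) = ⨅ n, κ x (Pn n x) :=
      Directed.measure_iInter (fun n => (hPnmeas n x).nullMeasurableSet) hd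
        ⟨0, measure_ne_top _ _⟩
    rw [h1]
    simp [hx.2]
  -- on W, the partition element equals the atom
  have hclass : ∀ x ∈ W, partOf ℙ x = A x := by
    intro x hx
    have h1 : κ x (A x ∩ X₀) = 1 :=
      inter_eq_one (κ x) (hAmeas x) hX₀m (hAx1 x hx) hx.1
    have h2 : (A x ∩ X₀).Nonempty := by
      rcases Set.eq_empty_or_nonempty (A x ∩ X₀) with h | h
      · rw [h] at h1; simp at h1
      · exact h
    obtain ⟨z, hzA, hzX₀⟩ := h2
    have h3 : partOf ℙ z = A x := by
      rw [hinter z hzX₀]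
      exact Set.iInter_congr fun n => hR hzA n
    have h4 : x ∈ partOf ℙ z := h3 ▸ hxA x
    rw [partOf_eq hpart (partOf_spec hpart z).1 h4, h3]
  -- the disintegration
  set ν : Set X → Measure X := fun P =>
    if h : ∃ x, x ∈ W ∧ partOf ℙ x = P then κ h.choose else μ with hν_def
  have hν_eq : ∀ x ∈ W, ∀ E : Set X, MeasurableSet E →
      ν (partOf ℙ x) E = κ x E := by
    intro x hx E hE
    have hex : ∃ y, y ∈ W ∧ partOf ℙ y = partOf ℙ x := ⟨x, hx, rfl⟩
    simp only [hν_def]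
    rw [dif_pos hex]
    obtain ⟨hyW, hyP⟩ := hex.choose_spec
    have h1 : A hex.choose = A x := by
      rw [← hclass _ hyW, ← hclass x hx, hyP]
    have h2 : hex.choose ∈ A x := h1 ▸ hxA hex.choose
    exact (hfinv _ (hκmeas hE) x hex.choose h2).symm
  have hν_not : ∀ x, x ∉ W → ν (partOf ℙ x) = μ := by
    intro x hx
    simp only [hν_def]
    rw [dif_neg]
    rintro ⟨y, hyW, hyP⟩
    have h1 : x ∈ A y := by
      rw [← hclass y hyW, hyP]
      exact (partOf_spec hpart x).2
    exact hx ((hWinv y x h1).1 hyW)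
  refine ⟨ν, ?_, ?_, ?_⟩
  · intro P hP
    simp only [hν_def]
    split_ifs with h
    · infer_instance
    · infer_instance
  · filter_upwards [hWae] with x hx
    have h1 := hν_eq x hx (A x) (hAmeas x)
    have h2 := hclass x hx
    rw [h2] at h1 ⊢
    rw [h1, hAx1 x hx]
  · intro E hE
    have hfE : (fun x => ν (partOf ℙ x) E)
        = W.piecewise (fun x => κ x E) (fun _ => μ E) := by
      funext x
      by_cases hx : x ∈ W
      · rw [Set.piecewise_eq_of_mem _ _ _ hx, hν_eq x hx E hE]
      · rw [Set.piecewise_eq_of_notMem _ _ _ hx, hν_not x hx]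
    constructor
    · rw [hfE]
      exact Measurable.piecewise hWb (hκBmeas hE) measurable_const
    · rw [hfE]
      have hae : W.piecewise (fun x => κ x E) (fun _ => μ E) =ᵐ[μ] fun x => κ x E := by
        filter_upwards [hWae] with x hx
        rw [Set.piecewise_eq_of_mem _ _ _ hx]
      rw [lintegral_congr_ae hae, hint hE]

end ErgodicDecomposition
end

section
/- Let m be the Haar (Lebesgue) probability measure on the circle S¹ = ℝ/ℤ, let α be irrational, and let f : S¹ → S¹ be the rotation f(x) = x + α (mod 1). Let ℙ = {O(x) : x ∈ S¹} be the partition of S¹ into full orbits O(x) = {x + nα (mod 1) : n ∈ ℤ}. Then there exists no disintegration of m with respect to ℙ. -/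
open MeasureTheory Filter Set Topology

namespace ErgodicDecomposition

variable {X : Type*}

/-- The π-system generated by a countable family is countable. -/
lemma countable_generatePiSystem {α : Type*} {S : Set (Set α)} (h : S.Countable) :
    (generatePiSystem S).Countable := by
  have hsub : generatePiSystem S ⊆ (fun T : Set (Set α) => ⋂₀ T) '' {T | T.Finite ∧ T ⊆ S} := by
    intro s hs
    induction hs with
    | base h_s =>
        exact ⟨{_}, ⟨finite_singleton _, singleton_subset_iff.2 h_s⟩, sInter_singleton _⟩
    | inter hs ht hne ihs iht =>
        obtain ⟨T₁, ⟨hT₁f, hT₁s⟩, hT₁⟩ := ihs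
        obtain ⟨T₂, ⟨hT₂f, hT₂s⟩, hT₂⟩ := iht
        exact ⟨T₁ ∪ T₂, ⟨hT₁f.union hT₂f, union_subset hT₁s hT₂s⟩,
          by simp only at hT₁ hT₂ ⊢; rw [sInter_union, hT₁, hT₂]⟩
  exact (((countable_setOf_finite_subset h).image _).mono hsub)

lemma unitAddCircle_noAtoms : NullSingletonClass (volume : Measure UnitAddCircle) := by
  haveI : (𝓝[≠] (0 : UnitAddCircle)).NeBot := by
    rw [← mem_closure_iff_nhdsWithin_neBot]
    have hcont : Continuous (fun x : ℝ => (x : UnitAddCircle)) := AddCircle.continuous_mk' 1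
    have htend : Tendsto (fun n : ℕ => ((1 / (n : ℝ) : ℝ) : UnitAddCircle)) atTop (𝓝 0) := by
      have := (hcont.tendsto 0).comp tendsto_one_div_atTop_nhds_zero_nat
      simpa [Function.comp_def] using this
    refine mem_closure_of_tendsto htend ?_
    filter_upwards [eventually_ge_atTop 2] with n hn
    have h0 : (0 : ℝ) < 1 / (n : ℝ) := by positivity
    have h1 : (1 / (n : ℝ) : ℝ) < 1 := by
      rw [div_lt_one (by positivity)]
      exact_mod_cast Nat.lt_of_lt_of_le one_lt_two hn
    simp only [mem_compl_iff, mem_singleton_iff]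
    rw [AddCircle.coe_eq_zero_iff]
    rintro ⟨m, hm⟩
    rw [zsmul_eq_mul, mul_one] at hm
    have hm0 : (0 : ℤ) < m := by exact_mod_cast hm ▸ h0
    have hm1 : m < 1 := by exact_mod_cast hm ▸ h1
    omega
  infer_instance

lemma denseRange_zsmul_irrational {a : ℝ} (ha : Irrational a) :
    DenseRange (fun n : ℤ => n • ((a : UnitAddCircle))) := by
  -- the subgroup generated by `a` and `1` is dense in `ℝ`
  set S : AddSubgroup ℝ := AddSubgroup.zmultiples a ⊔ AddSubgroup.zmultiples (1 : ℝ) with hS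
  have haS : a ∈ S := AddSubgroup.mem_sup_left (AddSubgroup.mem_zmultiples a)
  have h1S : (1 : ℝ) ∈ S := AddSubgroup.mem_sup_right (AddSubgroup.mem_zmultiples 1)
  have hdense : Dense (S : Set ℝ) := by
    rcases S.dense_or_cyclic with h | ⟨b, hb⟩
    · exact h
    · exfalso
      rw [← AddSubgroup.zmultiples_eq_closure] at hb
      rw [hb] at haS h1S
      obtain ⟨m, hm⟩ := haS
      obtain ⟨k, hk⟩ := h1S
      simp only [zsmul_eq_mul] at hm hk
      have hk0 : (k : ℝ) ≠ 0 := by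
        intro h0
        rw [h0, zero_mul] at hk; exact one_ne_zero hk.symm
      have : a = (m : ℝ) / (k : ℝ) := by
        field_simp
        rw [← hm, mul_assoc, mul_comm b, hk, mul_one]
      exact ha ⟨(m : ℚ) / (k : ℚ), by push_cast; rw [this]⟩
  -- push forward through the quotient map
  have hcont : Continuous (fun x : ℝ => (x : UnitAddCircle)) := AddCircle.continuous_mk' 1
  have hsurj : Function.Surjective (fun x : ℝ => (x : UnitAddCircle)) :=
    Quotient.exists_rep
  have himg : Dense ((fun x : ℝ => (x : UnitAddCircle)) '' (S : Set ℝ)) :=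
    hsurj.denseRange.dense_image hcont hdense
  refine himg.mono ?_
  rintro y ⟨x, hx, rfl⟩
  rw [hS] at hx
  obtain ⟨u, hu, v, hv, huv⟩ := AddSubgroup.mem_sup.1 hx
  obtain ⟨m, rfl⟩ := hu
  obtain ⟨k, rfl⟩ := hv
  refine ⟨m, ?_⟩
  have : ((k • (1:ℝ) : ℝ) : UnitAddCircle) = 0 := by
    rw [AddCircle.coe_zsmul]
    have h10 : ((1:ℝ) : UnitAddCircle) = 0 := AddCircle.coe_period 1
    rw [h10, smul_zero]
  show m • ((a : UnitAddCircle)) = _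
  simp only [← huv]
  rw [AddCircle.coe_add, AddCircle.coe_zsmul, this, add_zero]

section Main

variable {X : Type*}

lemma orb_self (a : ℝ) (x : UnitAddCircle) :
    x ∈ {y | ∃ n : ℤ, y = x + n • ((a : UnitAddCircle))} := ⟨0, by simp⟩

lemma orb_eq_of_mem {a : ℝ} {x y : UnitAddCircle}
    (h : y ∈ {y | ∃ n : ℤ, y = x + n • ((a : UnitAddCircle))}) :
    {z | ∃ n : ℤ, z = y + n • ((a : UnitAddCircle))} =
      {z | ∃ n : ℤ, z = x + n • ((a : UnitAddCircle))} := by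
  obtain ⟨n, rfl⟩ := h
  ext z
  constructor
  · rintro ⟨m, rfl⟩
    exact ⟨n + m, by rw [add_zsmul]; abel⟩
  · rintro ⟨m, rfl⟩
    exact ⟨m - n, by rw [sub_zsmul]; abel⟩

lemma isPartition_orbits (a : ℝ) :
    IsPartition {P | ∃ x : UnitAddCircle, P = {y | ∃ n : ℤ, y = x + n • ((a : UnitAddCircle))}} := by
  intro x
  refine ⟨{y | ∃ n : ℤ, y = x + n • ((a : UnitAddCircle))}, ⟨⟨x, rfl⟩, orb_self a x⟩, ?_⟩
  rintro P ⟨⟨z, rfl⟩, hx⟩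
  exact (orb_eq_of_mem hx).symm

lemma partOf_orbit (a : ℝ) (x : UnitAddCircle) :
    partOf {P | ∃ x : UnitAddCircle, P = {y | ∃ n : ℤ, y = x + n • ((a : UnitAddCircle))}} x
      = {y | ∃ n : ℤ, y = x + n • ((a : UnitAddCircle))} := by
  rw [partOf]
  have h : ∃ P, P ∈ {P | ∃ x : UnitAddCircle,
      P = {y | ∃ n : ℤ, y = x + n • ((a : UnitAddCircle))}} ∧ x ∈ P :=
    ⟨_, ⟨x, rfl⟩, orb_self a x⟩
  rw [dif_pos h]
  obtain ⟨⟨z, hz⟩, hxz⟩ := h.choose_spec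
  rw [hz] at hxz ⊢
  exact (orb_eq_of_mem hxz).symm

end Main

/-- for an irrational rotation of the circle, Haar (Lebesgue) measure admits no
disintegration with respect to the partition into full orbits `{x + nα : n ∈ ℤ}`. -/
theorem no_disintegration_orbit_partition_irrational_rotation
    (a : ℝ) (ha : Irrational a) :
    ¬ ∃ ν : Set UnitAddCircle → Measure UnitAddCircle,
        IsDisintegration (volume : Measure UnitAddCircle)
          {P | ∃ x : UnitAddCircle, P = {y | ∃ n : ℤ, y = x + n • (↑a : UnitAddCircle)}}
          ν := by
  rintro ⟨ν, hprob, hae, hEq⟩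
  set α : UnitAddCircle := ((a : ℝ) : UnitAddCircle) with hα
  set ℙ : Set (Set UnitAddCircle) :=
    {P | ∃ x : UnitAddCircle, P = {y | ∃ n : ℤ, y = x + n • (↑a : UnitAddCircle)}} with hℙ
  haveI : NullSingletonClass (volume : Measure UnitAddCircle) := unitAddCircle_noAtoms
  haveI : IsProbabilityMeasure (volume : Measure UnitAddCircle) :=
    ⟨UnitAddCircle.measure_univ⟩
  have herg : Ergodic (fun y => α + y) (volume : Measure UnitAddCircle) :=
    ergodic_add_left_of_denseRange_zsmul (denseRange_zsmul_irrational ha) volume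
  have hinv : ∀ x : UnitAddCircle, partOf ℙ (α + x) = partOf ℙ x := by
    intro x
    rw [hℙ, partOf_orbit, partOf_orbit]
    exact orb_eq_of_mem ⟨1, by rw [one_zsmul]; exact add_comm α x⟩
  set C := generatePiSystem (MeasurableSpace.countableGeneratingSet UnitAddCircle) with hC
  have hCc : C.Countable :=
    countable_generatePiSystem MeasurableSpace.countable_countableGeneratingSet
  have hCpi : IsPiSystem C := isPiSystem_generatePiSystem _
  have hCgen : MeasurableSpace.generateFrom C = (inferInstance : MeasurableSpace UnitAddCircle) := by
    rw [hC, generateFrom_generatePiSystem_eq,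
      MeasurableSpace.generateFrom_countableGeneratingSet]
  have hCmeas : ∀ E ∈ C, MeasurableSet E := by
    intro E hE
    exact hCgen.le _ (MeasurableSpace.measurableSet_generateFrom hE)
  have hconst : ∀ E ∈ C, ∀ᵐ x, ν (partOf ℙ x) E = volume E := by
    intro E hE
    obtain ⟨hmeas, hint⟩ := hEq E (hCmeas E hE)
    obtain ⟨c, hc⟩ := herg.ae_eq_const_of_ae_eq_comp₀ hmeas.nullMeasurable
      (Filter.Eventually.of_forall fun x => by
        show ν (partOf ℙ (α + x)) E = ν (partOf ℙ x) E
        rw [hinv x])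
    have hc' : volume E = c := by
      rw [hint, lintegral_congr_ae hc]
      simp only [Function.const_apply, lintegral_const, measure_univ, mul_one]
    filter_upwards [hc] with x hx
    rw [hx, hc']
    rfl
  have hall : ∀ᵐ x, ∀ E ∈ C, ν (partOf ℙ x) E = volume E := (ae_ball_iff hCc).2 hconst
  obtain ⟨x₀, hx₀C, hx₀P⟩ := (hall.and hae).exists
  have hPofx : partOf ℙ x₀ = {y | ∃ n : ℤ, y = x₀ + n • (↑a : UnitAddCircle)} := by
    rw [hℙ, partOf_orbit]
  have hPmem : partOf ℙ x₀ ∈ ℙ := by rw [hPofx]; exact ⟨x₀, rfl⟩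
  haveI := hprob _ hPmem
  have hext : ν (partOf ℙ x₀) = volume :=
    ext_of_generate_finite C hCgen.symm hCpi (fun s hs => hx₀C s hs)
      (by rw [measure_univ, measure_univ])
  have hcnt : (partOf ℙ x₀).Countable := by
    rw [hPofx]
    have : {y : UnitAddCircle | ∃ n : ℤ, y = x₀ + n • (↑a : UnitAddCircle)} =
        Set.range (fun n : ℤ => x₀ + n • (↑a : UnitAddCircle)) := by
      ext y; simp [eq_comm]
    rw [this]
    exact countable_range _
  have hzero : volume (partOf ℙ x₀) = 0 := hcnt.measure_zero _
  rw [hext, hzero] at hx₀P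
  exact zero_ne_one hx₀P

end ErgodicDecomposition
end
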